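/- For every real number x and every ρ ∈ (0,1], one has |e^x - 1 - x - x²/2| ≤ |x|^{2+ρ} e^{max(x,0)}. -/

import Mathlib

open Real Set

/-- For `x ≤ 0`, `exp x ≤ 1 + x + x²/2`. -/
lemma exp_le_quadratic_of_nonpos {x : ℝ} (hx : x ≤ 0) :
    Real.exp x - 1 - x - x ^ 2 / 2 ≤ 0 := by
  have hmono : Monotone fun x : ℝ => Real.exp x - 1 - x - x ^ 2 / 2 := by
    have hd : ∀ y : ℝ, HasDerivAt (fun x : ℝ => Real.exp x - 1 - x - x ^ 2 / 2)
        (Real.exp y - 1 - y) y := by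
      intro y
      have h1 : HasDerivAt (fun x : ℝ => x ^ 2 / 2) y y := by
        have := (hasDerivAt_pow 2 y).div_const 2
        refine this.congr_deriv ?_
        push_cast
        ring
      have := (((Real.hasDerivAt_exp y).sub_const 1).sub (hasDerivAt_id y)).sub h1
      exact this
    have := monotone_of_deriv_nonneg (fun y => (hd y).differentiableAt)
      (fun y => by
        rw [(hd y).deriv]
        nlinarith [Real.add_one_le_exp y])
    exact fun a b hab => this hab
  simpa using hmono hx

/-- For `x ≤ 0`, `x³/6 ≤ exp x - 1 - x - x²/2`. -/
lemma cubic_le_exp_of_nonpos {x : ℝ} (hx : x ≤ 0) :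
    x ^ 3 / 6 ≤ Real.exp x - 1 - x - x ^ 2 / 2 := by
  set k : ℝ → ℝ := fun x => Real.exp x - 1 - x - x ^ 2 / 2 - x ^ 3 / 6 with hk
  have hd : ∀ y : ℝ, HasDerivAt k (Real.exp y - 1 - y - y ^ 2 / 2) y := by
    intro y
    have h1 : HasDerivAt (fun x : ℝ => x ^ 2 / 2) y y := by
      have := (hasDerivAt_pow 2 y).div_const 2
      refine this.congr_deriv ?_; push_cast; ring
    have h2 : HasDerivAt (fun x : ℝ => x ^ 3 / 6) (y ^ 2 / 2) y := by
      have := (hasDerivAt_pow 3 y).div_const 6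
      refine this.congr_deriv ?_; push_cast; ring
    have := ((((Real.hasDerivAt_exp y).sub_const 1).sub (hasDerivAt_id y)).sub h1).sub h2
    exact this
  have hanti : AntitoneOn k (Set.Iic 0) := by
    apply antitoneOn_of_deriv_nonpos (convex_Iic 0)
      (Continuous.continuousOn (by fun_prop))
      (fun y _ => (hd y).differentiableAt.differentiableWithinAt)
    intro y hy
    rw [interior_Iic] at hy
    rw [(hd y).deriv]
    exact exp_le_quadratic_of_nonpos hy.le
  have := hanti hx (self_mem_Iic) hx
  simp only [hk] at this
  simp at this
  linarith

theorem abs_exp_sub_one_sub_sub_sq_le (x ρ : ℝ) (hρ0 : 0 < ρ) (hρ1 : ρ ≤ 1) :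
    |Real.exp x - 1 - x - x ^ 2 / 2| ≤ |x| ^ (2 + ρ) * Real.exp (max x 0) := by
  rcases eq_or_ne x 0 with rfl | hx0
  · simp
    positivity
  rcases le_or_gt x 0 with hx | hx
  · -- x < 0
    have hxneg : x < 0 := lt_of_le_of_ne hx hx0
    have hmax : max x 0 = 0 := max_eq_right hx
    rw [hmax, Real.exp_zero, mul_one]
    have hub := exp_le_quadratic_of_nonpos hx
    have hlb := cubic_le_exp_of_nonpos hx
    have habs : |Real.exp x - 1 - x - x ^ 2 / 2| ≤ |x| ^ 3 / 6 := by
      rw [abs_le]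
      constructor
      · have : -(|x| ^ 3) = x ^ 3 := by
          rw [abs_of_neg hxneg]; ring
        linarith [hlb, this]
      · have : (0:ℝ) ≤ |x| ^ 3 / 6 := by positivity
        linarith
    have ht : (0:ℝ) < |x| := abs_pos.mpr hx0
    rcases le_or_gt (|x|) 6 with h6 | h6
    · -- |x| ≤ 6 : |x|^3/6 ≤ |x|^(2+ρ)
      refine habs.trans ?_
      have h3 : |x| ^ (3:ℕ) = |x| ^ ((2+ρ) + (1-ρ)) := by
        rw [← Real.rpow_natCast (|x|) 3]
        norm_num
      rw [div_le_iff₀ (by norm_num : (0:ℝ) < 6)] at *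
      rw [h3, Real.rpow_add ht]
      have h61 : |x| ^ (1 - ρ) ≤ 6 := by
        calc |x| ^ (1 - ρ) ≤ (6:ℝ) ^ (1 - ρ) :=
              Real.rpow_le_rpow (abs_nonneg x) h6 (by linarith)
          _ ≤ (6:ℝ) ^ (1:ℝ) :=
              Real.rpow_le_rpow_of_exponent_le (by norm_num) (by linarith)
          _ = 6 := by norm_num
      calc |x| ^ (2+ρ) * |x| ^ (1-ρ) ≤ |x| ^ (2+ρ) * 6 :=
            mul_le_mul_of_nonneg_left h61 (Real.rpow_nonneg (abs_nonneg x) _)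
        _ = |x| ^ (2+ρ) * 6 := rfl
    · -- |x| > 6
      have hx6 : x < -6 := by
        rw [abs_of_neg hxneg] at h6; linarith
      have hexp : (0:ℝ) < Real.exp x := Real.exp_pos x
      have h1 : |Real.exp x - 1 - x - x ^ 2 / 2| = 1 + x + x ^ 2 / 2 - Real.exp x := by
        rw [abs_of_nonpos hub]; ring
      have h2 : 1 + x + x ^ 2 / 2 - Real.exp x ≤ x ^ 2 := by nlinarith
      have h3 : |x| ^ ((2:ℝ)) = x ^ 2 := by
        rw [show ((2:ℝ)) = ((2:ℕ):ℝ) by norm_num, Real.rpow_natCast, sq_abs]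
      have h4 : |x| ^ ((2:ℝ)) ≤ |x| ^ (2 + ρ) :=
        Real.rpow_le_rpow_of_exponent_le (by linarith) (by linarith)
      calc |Real.exp x - 1 - x - x ^ 2 / 2| = 1 + x + x ^ 2 / 2 - Real.exp x := h1
        _ ≤ x ^ 2 := h2
        _ = |x| ^ ((2:ℝ)) := h3.symm
        _ ≤ |x| ^ (2 + ρ) := h4
  · -- x > 0
    have hmax : max x 0 = x := max_eq_left hx.le
    rw [hmax]
    have hax : |x| = x := abs_of_pos hx
    rcases le_or_gt x 1 with h1 | h1
    · -- 0 < x ≤ 1 : use exp_bound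
      have hb := Real.exp_bound (x := x) (by rw [hax]; exact h1) (n := 3) (by norm_num)
      have hsum : ∑ m ∈ Finset.range 3, x ^ m / m.factorial = 1 + x + x ^ 2 / 2 := by
        norm_num [Finset.sum_range_succ, Nat.factorial]
      rw [hsum, show Real.exp x - (1 + x + x ^ 2 / 2) = Real.exp x - 1 - x - x ^ 2 / 2
        from by ring] at hb
      norm_num [Nat.factorial] at hb
      have hb' : |Real.exp x - 1 - x - x ^ 2 / 2| ≤ |x| ^ 3 := by
        refine hb.trans ?_
        have : (0:ℝ) ≤ |x| ^ 3 := by positivity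
        nlinarith
      refine hb'.trans ?_
      have h3 : |x| ^ (3:ℕ) = |x| ^ ((3:ℝ)) := by
        rw [← Real.rpow_natCast (|x|) 3]; norm_num
      have h4 : |x| ^ ((3:ℝ)) ≤ |x| ^ (2 + ρ) :=
        Real.rpow_le_rpow_of_exponent_ge (abs_pos.mpr hx0) (by rw [hax]; exact h1)
          (by linarith)
      calc |x| ^ (3:ℕ) = |x| ^ ((3:ℝ)) := h3
        _ ≤ |x| ^ (2 + ρ) := h4
        _ ≤ |x| ^ (2 + ρ) * Real.exp x := by
            nlinarith [Real.one_le_exp hx.le, Real.rpow_nonneg (abs_nonneg x) (2 + ρ)]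
    · -- x > 1
      have hq := Real.quadratic_le_exp_of_nonneg hx.le
      have hpos : 0 ≤ Real.exp x - 1 - x - x ^ 2 / 2 := by linarith
      rw [abs_of_nonneg hpos]
      have h5 : (1:ℝ) ≤ |x| ^ (2 + ρ) :=
        Real.one_le_rpow (by rw [hax]; exact h1.le) (by linarith)
      nlinarith [Real.exp_pos x, hx, sq_nonneg x]
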